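/- If K₁ satisfies ε₁-differential privacy and K₂ satisfies ε₂-differential privacy and they use independent randomness, then the mechanism D ↦ (K₁(D), K₂(D)) satisfies (ε₁ + ε₂)-differential privacy. -/

import Mathlib

open MeasureTheory

/-- Sequential composition: if `K₁` is `ε₁`-differentially private and `K₂` is
`ε₂`-differentially private and they use independent randomness (modeled by the
product measure `(K₁ D).prod (K₂ D)`), then the combined mechanism
`D ↦ (K₁(D), K₂(D))` satisfies `(ε₁ + ε₂)`-differential privacy. -/
theorem composition_dp {D Ω₁ Ω₂ : Type*} [MeasurableSpace Ω₁] [MeasurableSpace Ω₂]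
    (K₁ : D → Measure Ω₁) (K₂ : D → Measure Ω₂) (N : D → D → Prop) (ε₁ ε₂ : ℝ)
    [∀ d, SigmaFinite (K₂ d)]
    (hDP₁ : ∀ D₁ D₂, N D₁ D₂ → ∀ S : Set Ω₁, MeasurableSet S →
      K₁ D₁ S ≤ ENNReal.ofReal (Real.exp ε₁) * K₁ D₂ S)
    (hDP₂ : ∀ D₁ D₂, N D₁ D₂ → ∀ S : Set Ω₂, MeasurableSet S →
      K₂ D₁ S ≤ ENNReal.ofReal (Real.exp ε₂) * K₂ D₂ S) :
    ∀ D₁ D₂, N D₁ D₂ → ∀ S : Set (Ω₁ × Ω₂), MeasurableSet S →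
      ((K₁ D₁).prod (K₂ D₁)) S ≤ ENNReal.ofReal (Real.exp (ε₁ + ε₂)) * ((K₁ D₂).prod (K₂ D₂)) S := by
  intro D₁ D₂ hN S hS
  have h1 : ((K₁ D₁).prod (K₂ D₁)) S = ∫⁻ x, K₂ D₁ (Prod.mk x ⁻¹' S) ∂(K₁ D₁) :=
    Measure.prod_apply hS
  have h2 : ((K₁ D₂).prod (K₂ D₂)) S = ∫⁻ x, K₂ D₂ (Prod.mk x ⁻¹' S) ∂(K₁ D₂) :=
    Measure.prod_apply hS
  have hle : K₁ D₁ ≤ ENNReal.ofReal (Real.exp ε₁) • K₁ D₂ := by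
    exact Measure.le_iff.mpr fun s hs => by simpa using hDP₁ D₁ D₂ hN s hs
  calc ((K₁ D₁).prod (K₂ D₁)) S
      = ∫⁻ x, K₂ D₁ (Prod.mk x ⁻¹' S) ∂(K₁ D₁) := h1
    _ ≤ ∫⁻ x, ENNReal.ofReal (Real.exp ε₂) * K₂ D₂ (Prod.mk x ⁻¹' S) ∂(K₁ D₁) :=
        lintegral_mono fun x => hDP₂ D₁ D₂ hN _ (measurable_prodMk_left hS)
    _ ≤ ∫⁻ x, ENNReal.ofReal (Real.exp ε₂) * K₂ D₂ (Prod.mk x ⁻¹' S)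
          ∂(ENNReal.ofReal (Real.exp ε₁) • K₁ D₂) :=
        lintegral_mono' hle le_rfl
    _ = ENNReal.ofReal (Real.exp ε₁) *
          (ENNReal.ofReal (Real.exp ε₂) * ∫⁻ x, K₂ D₂ (Prod.mk x ⁻¹' S) ∂(K₁ D₂)) := by
        rw [lintegral_smul_measure, lintegral_const_mul _ (measurable_measure_prodMk_left hS), smul_eq_mul]
    _ = ENNReal.ofReal (Real.exp (ε₁ + ε₂)) * ((K₁ D₂).prod (K₂ D₂)) S := by
        rw [h2, Real.exp_add, ENNReal.ofReal_mul (Real.exp_nonneg _), mul_assoc]
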